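/- arXiv:1905.04853 — 6 statements merged into one kernel-verified Lean document; each statement's English description precedes it below -/
import Mathlib

section
/- For a matching M in a 2-layered bipartite graph, if X and Y are (the edge sets of) two distinct connected components of the intersection graph H[M] (vertices are edges of M, adjacency is crossing), then X and Y are comparable under ≺: either every edge of X precedes every edge of Y, or vice versa. Hence the set of connected components forms a chain under ≺. -/
def inter (e f : ℕ × ℕ) : Prop :=
  (e.1 < f.1 ∧ f.2 < e.2) ∨ (f.1 < e.1 ∧ e.2 < f.2)

def eprec (e f : ℕ × ℕ) : Prop := e.1 < f.1 ∧ e.2 < f.2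

def IsMatching (M : Set (ℕ × ℕ)) : Prop :=
  ∀ e ∈ M, ∀ f ∈ M, e ≠ f → e.1 ≠ f.1 ∧ e.2 ≠ f.2

def HG (M : Set (ℕ × ℕ)) : SimpleGraph M where
  Adj e f := inter e.1 f.1
  symm := by constructor; intro a b h; unfold inter at h ⊢; omega
  loopless := by constructor; intro a h; unfold inter at h; omega

lemma walk_prec_left (M : Set (ℕ × ℕ)) (hM : IsMatching M) {a b y : M}
    (p : (HG M).Walk a b)
    (hy : ∀ c : M, (HG M).Reachable a c → ¬ (HG M).Adj c y ∧ c ≠ y)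
    (h : eprec a.1 y.1) : eprec b.1 y.1 := by
  induction p with
  | nil => exact h
  | @cons a c b hadj p ih =>
    have hr : (HG M).Reachable a c := hadj.reachable
    obtain ⟨hna, hne⟩ := hy c hr
    have hcoord := hM c.1 c.2 y.1 y.2 (fun h' => hne (Subtype.ext h'))
    have hstep : eprec c.1 y.1 := by
      simp only [HG, inter, eprec] at hadj hna h ⊢
      omega
    exact ih (fun d hd => hy d (hr.trans hd)) hstep

lemma walk_prec_right (M : Set (ℕ × ℕ)) (hM : IsMatching M) {a b y : M}
    (p : (HG M).Walk a b)
    (hy : ∀ c : M, (HG M).Reachable a c → ¬ (HG M).Adj c y ∧ c ≠ y)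
    (h : eprec y.1 a.1) : eprec y.1 b.1 := by
  induction p with
  | nil => exact h
  | @cons a c b hadj p ih =>
    have hr : (HG M).Reachable a c := hadj.reachable
    obtain ⟨hna, hne⟩ := hy c hr
    have hcoord := hM c.1 c.2 y.1 y.2 (fun h' => hne (Subtype.ext h'))
    have hstep : eprec y.1 c.1 := by
      simp only [HG, inter, eprec] at hadj hna h ⊢
      omega
    exact ih (fun d hd => hy d (hr.trans hd)) hstep

theorem components_comparable (M : Set (ℕ × ℕ)) (hM : IsMatching M)
    (u v : M)
    (huv : (HG M).connectedComponentMk u ≠ (HG M).connectedComponentMk v) :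
    (∀ x y : M, (HG M).connectedComponentMk x = (HG M).connectedComponentMk u →
      (HG M).connectedComponentMk y = (HG M).connectedComponentMk v → eprec x.1 y.1) ∨
    (∀ x y : M, (HG M).connectedComponentMk x = (HG M).connectedComponentMk u →
      (HG M).connectedComponentMk y = (HG M).connectedComponentMk v → eprec y.1 x.1) := by
  have sep : ∀ c d : M, (HG M).connectedComponentMk c = (HG M).connectedComponentMk u →
      (HG M).connectedComponentMk d = (HG M).connectedComponentMk v →
      ¬ (HG M).Adj c d ∧ c ≠ d := by
    intro c d hc hd
    refine ⟨fun hadj => huv ?_, fun h => huv ?_⟩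
    · rw [← hc, ← hd]; exact SimpleGraph.ConnectedComponent.sound hadj.reachable
    · rw [← hc, ← hd, h]
  have key : ∀ x y : M, (HG M).connectedComponentMk x = (HG M).connectedComponentMk u →
      (HG M).connectedComponentMk y = (HG M).connectedComponentMk v →
      eprec x.1 y.1 ∨ eprec y.1 x.1 := by
    intro x y hx hy
    obtain ⟨hna, hne⟩ := sep x y hx hy
    have hcoord := hM x.1 x.2 y.1 y.2 (fun h' => hne (Subtype.ext h'))
    simp only [HG, inter] at hna
    unfold eprec
    omega
  have prop : ∀ x y : M, (HG M).connectedComponentMk x = (HG M).connectedComponentMk u →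
      (HG M).connectedComponentMk y = (HG M).connectedComponentMk v →
      eprec u.1 v.1 → eprec x.1 y.1 := by
    intro x y hx hy h0
    have hux : (HG M).Reachable u x := SimpleGraph.ConnectedComponent.exact hx.symm
    have hvy : (HG M).Reachable v y := SimpleGraph.ConnectedComponent.exact hy.symm
    have h1 : eprec x.1 v.1 := by
      obtain ⟨p⟩ := hux
      refine walk_prec_left M hM p (fun c hc => sep c v ?_ rfl) h0
      exact (SimpleGraph.ConnectedComponent.sound hc).symm
    obtain ⟨p⟩ := hvy
    refine walk_prec_right M hM p (fun c hc => ?_) h1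
    have := sep x c hx (SimpleGraph.ConnectedComponent.sound hc).symm
    exact ⟨fun h => this.1 h.symm, fun h => this.2 h.symm⟩
  have prop' : ∀ x y : M, (HG M).connectedComponentMk x = (HG M).connectedComponentMk u →
      (HG M).connectedComponentMk y = (HG M).connectedComponentMk v →
      eprec v.1 u.1 → eprec y.1 x.1 := by
    intro x y hx hy h0
    have hux : (HG M).Reachable u x := SimpleGraph.ConnectedComponent.exact hx.symm
    have hvy : (HG M).Reachable v y := SimpleGraph.ConnectedComponent.exact hy.symm
    have h1 : eprec v.1 x.1 := by
      obtain ⟨p⟩ := hux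
      exact walk_prec_right M hM p
        (fun c hc => sep c v (SimpleGraph.ConnectedComponent.sound hc).symm rfl) h0
    obtain ⟨p⟩ := hvy
    refine walk_prec_left M hM p (fun c hc => ?_) h1
    have := sep x c hx (SimpleGraph.ConnectedComponent.sound hc).symm
    exact ⟨fun h => this.1 h.symm, fun h => this.2 h.symm⟩
  rcases key u v rfl rfl with h | h
  · exact Or.inl (fun x y hx hy => prop x y hx hy h)
  · exact Or.inr (fun x y hx hy => prop' x y hx hy h)
end

section
/- Let M = {e_1, …, e_{2d}} (d ≥ 2) be a matching whose intersection graph is the path e_1 — e_2 — ⋯ — e_{2d} (i.e., e_s and e_t intersect iff |s−t| = 1), with e_1 to the left of e_{2d} on the upper line. Then for every t ∈ [d−1], the odd-indexed edges satisfy e_{2t−1} ≺ e_{2t+1}, e_{2t−1} ≺ e_{2t+2}, and e_{2t} ≺ e_{2t+2}. -/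
theorem even_path_odd_indices_prec (d : ℕ) (hd : 2 ≤ d) (e : ℕ → ℕ × ℕ)
    (hmatch : ∀ s t, 1 ≤ s → s ≤ 2 * d → 1 ≤ t → t ≤ 2 * d → s ≠ t →
      (e s).1 ≠ (e t).1 ∧ (e s).2 ≠ (e t).2)
    (hpath : ∀ s t, 1 ≤ s → s ≤ 2 * d → 1 ≤ t → t ≤ 2 * d →
      (inter (e s) (e t) ↔ (s + 1 = t ∨ t + 1 = s)))
    (hleft : (e 1).1 < (e (2 * d)).1) :
    ∀ t, 1 ≤ t → t ≤ d - 1 →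
      eprec (e (2 * t - 1)) (e (2 * t + 1)) ∧
      eprec (e (2 * t - 1)) (e (2 * t + 2)) ∧
      eprec (e (2 * t)) (e (2 * t + 2)) := by
  -- far-apart edges do not intersect
  have hnon : ∀ s t, 1 ≤ s → s ≤ 2*d → 1 ≤ t → t ≤ 2*d → s + 1 ≠ t → t + 1 ≠ s →
      ¬ inter (e s) (e t) := by
    intro s t hs hs' ht ht' h1 h2 hin
    rcases (hpath s t hs hs' ht ht').mp hin with h | h
    · exact h1 h
    · exact h2 h
  -- consecutive edges intersect
  have hint : ∀ s, 1 ≤ s → s + 1 ≤ 2*d → inter (e s) (e (s+1)) := by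
    intro s hs hs'
    exact (hpath s (s+1) hs (by omega) (by omega) hs').mpr (Or.inl rfl)
  -- far-apart edges are comparable
  have hcomp : ∀ s t, 1 ≤ s → s ≤ 2*d → 1 ≤ t → t ≤ 2*d → s ≠ t → s+1 ≠ t → t+1 ≠ s →
      eprec (e s) (e t) ∨ eprec (e t) (e s) := by
    intro s t hs hs' ht ht' hne h1 h2
    have hni := hnon s t hs hs' ht ht' h1 h2
    have hm := hmatch s t hs hs' ht ht' hne
    unfold inter at hni
    unfold eprec
    omega
  -- Lemma B : e_s ≺ e_{s+2} implies e_s ≺ e_{s+3}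
  have hB : ∀ s, 1 ≤ s → s + 3 ≤ 2*d → eprec (e s) (e (s+2)) → eprec (e s) (e (s+3)) := by
    intro s hs hs' hP
    have hc := hcomp s (s+3) hs (by omega) (by omega) (by omega) (by omega) (by omega) (by omega)
    have hi : inter (e (s+2)) (e (s+2+1)) := hint (s+2) (by omega) (by omega)
    have h23 : s + 2 + 1 = s + 3 := rfl
    rw [h23] at hi
    unfold eprec at *
    unfold inter at hi
    omega
  -- reversed version
  have hB' : ∀ s, 1 ≤ s → s + 3 ≤ 2*d → eprec (e (s+2)) (e s) → eprec (e (s+3)) (e s) := by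
    intro s hs hs' hP
    have hc := hcomp s (s+3) hs (by omega) (by omega) (by omega) (by omega) (by omega) (by omega)
    have hi : inter (e (s+2)) (e (s+2+1)) := hint (s+2) (by omega) (by omega)
    have h23 : s + 2 + 1 = s + 3 := rfl
    rw [h23] at hi
    unfold eprec at *
    unfold inter at hi
    omega
  -- Lemma C : direction propagation
  have hC : ∀ s, 1 ≤ s → s + 3 ≤ 2*d → eprec (e s) (e (s+2)) →
      eprec (e (s+1)) (e (s+1+2)) := by
    intro s hs hs' hP
    have hB3 := hB s hs hs' hP
    have hc := hcomp (s+1) (s+3) (by omega) (by omega) (by omega) (by omega)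
      (by omega) (by omega) (by omega)
    have hi : inter (e s) (e (s+1)) := hint s hs (by omega)
    have h13 : s + 1 + 2 = s + 3 := rfl
    rw [h13]
    unfold eprec at *
    unfold inter at hi
    omega
  have hC' : ∀ s, 1 ≤ s → s + 3 ≤ 2*d → eprec (e (s+2)) (e s) →
      eprec (e (s+1+2)) (e (s+1)) := by
    intro s hs hs' hP
    have hB3 := hB' s hs hs' hP
    have hc := hcomp (s+1) (s+3) (by omega) (by omega) (by omega) (by omega)
      (by omega) (by omega) (by omega)
    have hi : inter (e s) (e (s+1)) := hint s hs (by omega)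
    have h13 : s + 1 + 2 = s + 3 := rfl
    rw [h13]
    unfold eprec at *
    unfold inter at hi
    omega
  -- global propagation from the first step
  have hPall : eprec (e 1) (e 3) → ∀ s, 1 ≤ s → s + 2 ≤ 2*d → eprec (e s) (e (s+2)) := by
    intro h1 s
    induction s with
    | zero => omega
    | succ n ih =>
      intro hs hs'
      rcases Nat.eq_zero_or_pos n with hn | hn
      · subst hn; exact h1
      · exact hC n hn (by omega) (ih hn (by omega))
  have hQall : eprec (e 3) (e 1) → ∀ s, 1 ≤ s → s + 2 ≤ 2*d → eprec (e (s+2)) (e s) := by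
    intro h1 s
    induction s with
    | zero => omega
    | succ n ih =>
      intro hs hs'
      rcases Nat.eq_zero_or_pos n with hn | hn
      · subst hn; exact h1
      · exact hC' n hn (by omega) (ih hn (by omega))
  -- e_1 ≺ e_{2d}
  have h1d : eprec (e 1) (e (2*d)) := by
    have hni := hnon 1 (2*d) (by omega) (by omega) (by omega) (by omega) (by omega) (by omega)
    have hm := hmatch 1 (2*d) (by omega) (by omega) (by omega) (by omega) (by omega)
    unfold inter at hni
    unfold eprec
    omega
  -- the direction must be forward: e_1 ≺ e_3
  have hP1 : eprec (e 1) (e 3) := by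
    rcases hcomp 1 3 (by omega) (by omega) (by omega) (by omega) (by omega) (by omega) (by omega)
      with h | h
    · exact h
    · exfalso
      -- build the decreasing chain e_{2k+1} ≺ e_1
      have hchain : ∀ k, 1 ≤ k → k ≤ d - 1 → eprec (e (2*k+1)) (e 1) := by
        intro k
        induction k with
        | zero => omega
        | succ n ih =>
          intro hk hk'
          rcases Nat.eq_zero_or_pos n with hn | hn
          · subst hn; exact h
          · have hprev := ih hn (by omega)
            have hQ : eprec (e ((2*n+1)+2)) (e (2*n+1)) :=
              hQall h (2*n+1) (by omega) (by omega)
            have hidx : 2*(n+1)+1 = (2*n+1)+2 := by ring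
            rw [hidx]
            exact ⟨lt_trans hQ.1 hprev.1, lt_trans hQ.2 hprev.2⟩
      have hlast := hchain (d-1) (by omega) (by omega)
      have hidx : 2*(d-1)+1 = 2*d - 1 := by omega
      rw [hidx] at hlast
      have hi : inter (e (2*d-1)) (e (2*d-1+1)) := hint (2*d-1) (by omega) (by omega)
      have hidx2 : 2*d - 1 + 1 = 2*d := by omega
      rw [hidx2] at hi
      unfold eprec at hlast h1d
      unfold inter at hi
      omega
  -- conclude
  intro t ht ht'
  have g1 : eprec (e (2*t-1)) (e ((2*t-1)+2)) := hPall hP1 (2*t-1) (by omega) (by omega)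
  have g3 : eprec (e (2*t)) (e ((2*t)+2)) := hPall hP1 (2*t) (by omega) (by omega)
  have g2 : eprec (e (2*t-1)) (e ((2*t-1)+3)) := hB (2*t-1) (by omega) (by omega) g1
  have i1 : (2*t-1)+2 = 2*t+1 := by omega
  have i2 : (2*t-1)+3 = 2*t+2 := by omega
  rw [i1] at g1
  rw [i2] at g2
  exact ⟨g1, g2, g3⟩
end

section
/- Let M = {e_1, …, e_{2d}} (d ≥ 2) be a matching whose intersection graph is the path e_1 — ⋯ — e_{2d} with e_1 left of e_{2d} on the upper line. If e_1 is to the left of e_2 on the upper line, then for every t ∈ [d], e_{2t−1} is to the left of e_{2t} on the upper line (all consecutive crossing pairs are 'upper links' with consistent orientation). -/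
theorem even_path_upper_links_consistent (d : ℕ) (hd : 2 ≤ d) (e : ℕ → ℕ × ℕ)
    (hmatch : ∀ s t, 1 ≤ s → s ≤ 2 * d → 1 ≤ t → t ≤ 2 * d → s ≠ t →
      (e s).1 ≠ (e t).1 ∧ (e s).2 ≠ (e t).2)
    (hpath : ∀ s t, 1 ≤ s → s ≤ 2 * d → 1 ≤ t → t ≤ 2 * d →
      (inter (e s) (e t) ↔ (s + 1 = t ∨ t + 1 = s)))
    (hleft : (e 1).1 < (e (2 * d)).1)
    (hfirst : (e 1).1 < (e 2).1) :
    ∀ t, 1 ≤ t → t ≤ d → (e (2 * t - 1)).1 < (e (2 * t)).1 := by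
  have step : ∀ s t u, 1 ≤ s → u ≤ 2 * d → s + 1 = t → t + 1 = u →
      (((e s).1 < (e t).1 → (e u).1 < (e t).1) ∧
       ((e t).1 < (e s).1 → (e t).1 < (e u).1)) := by
    intro s t u hs hu hst htu
    have h12 : inter (e s) (e t) :=
      (hpath s t hs (by omega) (by omega) (by omega)).2 (Or.inl hst)
    have h23 : inter (e t) (e u) :=
      (hpath t u (by omega) (by omega) (by omega) hu).2 (Or.inl htu)
    have h13 : ¬ inter (e s) (e u) := by
      intro h
      have := (hpath s u hs (by omega) (by omega) hu).1 h
      omega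
    unfold inter at h12 h23 h13
    omega
  intro t
  induction t with
  | zero => omega
  | succ n ih =>
    intro h1 h2
    rcases Nat.eq_zero_or_pos n with hn | hn
    · subst hn
      simpa using hfirst
    · have hprev : (e (2 * n - 1)).1 < (e (2 * n)).1 := ih (by omega) (by omega)
      have s1 := (step (2 * n - 1) (2 * n) (2 * n + 1) (by omega) (by omega)
        (by omega) (by omega)).1 hprev
      have s2 := (step (2 * n) (2 * n + 1) (2 * n + 2) (by omega) (by omega)
        (by omega) (by omega)).2 s1
      have e1 : 2 * (n + 1) - 1 = 2 * n + 1 := by omega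
      have e2 : 2 * (n + 1) = 2 * n + 2 := by omega
      rw [e1, e2]
      exact s2
end

section
/- Define μ_𝒯(T_s) as the maximum weight of a chain in (𝒯, ≺) whose maximum element is T_s, and μ_γ(i,q) as the maximum weight of a chain all of whose trapezoids are contained in A[i] ∪ B[q] and whose rightmost trapezoid T satisfies γ_B(T) = q (with μ_γ(0,q)=0). Then μ_𝒯(T_s) = ω(T_s) + max{ μ_γ(λ_A(T_s)−1, q) : q ∈ [λ_B(T_s)−1] } (interpreting the maximum over the empty set as 0). -/
structure Trap where
  lA : ℕ
  gA : ℕ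
  lB : ℕ
  gB : ℕ
  hA : lA ≤ gA
  hB : lB ≤ gB

def tprec (T T' : Trap) : Prop := T.gA < T'.lA ∧ T.gB < T'.lB

def contained (T : Trap) (i q : ℕ) : Prop :=
  1 ≤ T.lA ∧ T.gA ≤ i ∧ 1 ≤ T.lB ∧ T.gB ≤ q

noncomputable def muT (𝒯 : Finset Trap) (ω : Trap → NNReal) (Ts : Trap) : NNReal :=
  sSup {x | ∃ C : Finset Trap, ↑C ⊆ (𝒯 : Set Trap) ∧ IsChain tprec (↑C : Set Trap) ∧
    Ts ∈ C ∧ (∀ T ∈ C, T ≠ Ts → tprec T Ts) ∧ x = ∑ T ∈ C, ω T}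

noncomputable def muGamma (𝒯 : Finset Trap) (ω : Trap → NNReal) (i q : ℕ) : NNReal :=
  sSup {x | ∃ C : Finset Trap, ↑C ⊆ (𝒯 : Set Trap) ∧ IsChain tprec (↑C : Set Trap) ∧
    (∀ T ∈ C, contained T i q) ∧
    (∃ T ∈ C, T.gB = q ∧ ∀ T' ∈ C, T' ≠ T → tprec T' T) ∧ x = ∑ T ∈ C, ω T}

def TrapSSet (𝒯 : Finset Trap) (ω : Trap → NNReal) (Ts : Trap) : Set NNReal :=
  {x | ∃ C : Finset Trap, ↑C ⊆ (𝒯 : Set Trap) ∧ IsChain tprec (↑C : Set Trap) ∧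
    Ts ∈ C ∧ (∀ T ∈ C, T ≠ Ts → tprec T Ts) ∧ x = ∑ T ∈ C, ω T}

def MSet (𝒯 : Finset Trap) (ω : Trap → NNReal) (i q : ℕ) : Set NNReal :=
  {x | ∃ C : Finset Trap, ↑C ⊆ (𝒯 : Set Trap) ∧ IsChain tprec (↑C : Set Trap) ∧
    (∀ T ∈ C, contained T i q) ∧
    (∃ T ∈ C, T.gB = q ∧ ∀ T' ∈ C, T' ≠ T → tprec T' T) ∧ x = ∑ T ∈ C, ω T}

noncomputable instance : DecidableEq Trap := Classical.decEq _

lemma muT_eq (𝒯 : Finset Trap) (ω : Trap → NNReal) (Ts : Trap) :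
    muT 𝒯 ω Ts = sSup (TrapSSet 𝒯 ω Ts) := rfl

lemma muGamma_eq (𝒯 : Finset Trap) (ω : Trap → NNReal) (i q : ℕ) :
    muGamma 𝒯 ω i q = sSup (MSet 𝒯 ω i q) := rfl

lemma set_finite_aux (𝒯 : Finset Trap) (ω : Trap → NNReal) (s : Set NNReal)
    (h : ∀ x ∈ s, ∃ C : Finset Trap, ↑C ⊆ (𝒯 : Set Trap) ∧ x = ∑ T ∈ C, ω T) :
    s.Finite := by
  apply Set.Finite.subset ((𝒯.powerset.finite_toSet).image (fun C => ∑ T ∈ C, ω T))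
  intro x hx
  obtain ⟨C, hC, rfl⟩ := h x hx
  exact ⟨C, Finset.mem_coe.mpr (Finset.mem_powerset.mpr (Finset.coe_subset.mp hC)), rfl⟩

theorem muT_recurrence (𝒯 : Finset Trap) (ω : Trap → NNReal)
    (hb : ∀ T ∈ 𝒯, 1 ≤ T.lA ∧ 1 ≤ T.lB)
    (Ts : Trap) (hTs : Ts ∈ 𝒯) :
    muT 𝒯 ω Ts =
      ω Ts + sSup ({0} ∪ (fun q => muGamma 𝒯 ω (Ts.lA - 1) q) ''
        {q | 1 ≤ q ∧ q ≤ Ts.lB - 1}) := by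
  obtain ⟨hlA, hlB⟩ := hb Ts hTs
  have hSfin : (TrapSSet 𝒯 ω Ts).Finite :=
    set_finite_aux 𝒯 ω _ (by rintro x ⟨C, h1, _, _, _, rfl⟩; exact ⟨C, h1, rfl⟩)
  have hMfin : ∀ q, (MSet 𝒯 ω (Ts.lA - 1) q).Finite := fun q =>
    set_finite_aux 𝒯 ω _ (by rintro x ⟨C, h1, _, _, _, rfl⟩; exact ⟨C, h1, rfl⟩)
  have hUfin : (({0} : Set NNReal) ∪ (fun q => muGamma 𝒯 ω (Ts.lA - 1) q) ''
      {q | 1 ≤ q ∧ q ≤ Ts.lB - 1}).Finite := by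
    apply Set.Finite.union (Set.finite_singleton 0)
    apply Set.Finite.image
    have h : {q : ℕ | 1 ≤ q ∧ q ≤ Ts.lB - 1} = Set.Icc 1 (Ts.lB - 1) := rfl
    rw [h]; exact Set.finite_Icc _ _
  have hsingle : ω Ts ∈ TrapSSet 𝒯 ω Ts := by
    refine ⟨{Ts}, by simpa using hTs, ?_, Finset.mem_singleton_self Ts, ?_, by simp⟩
    · simp [IsChain, Set.Pairwise]
    · intro T hT hne
      exact absurd (Finset.mem_singleton.mp hT) hne
  rw [muT_eq]
  refine le_antisymm ?_ ?_
  · apply csSup_le ⟨ω Ts, hsingle⟩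
    rintro x ⟨C, hC𝒯, hchain, hTsC, hmax, rfl⟩
    rw [← Finset.add_sum_erase _ _ hTsC]
    apply add_le_add_right
    rcases Finset.eq_empty_or_nonempty (C.erase Ts) with he | hne
    · simp [he]
    · obtain ⟨Tm, hTmC, hTmmax⟩ := Finset.exists_max_image (C.erase Ts) (fun T => T.gB) hne
      have hTmne : Tm ≠ Ts := Finset.ne_of_mem_erase hTmC
      have hTmC' : Tm ∈ C := Finset.mem_of_mem_erase hTmC
      have hTmTs : tprec Tm Ts := hmax Tm hTmC' hTmne
      have hTm𝒯 := hb Tm (hC𝒯 hTmC')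
      have hq1 : 1 ≤ Tm.gB := le_trans hTm𝒯.2 Tm.hB
      have hq2 : Tm.gB ≤ Ts.lB - 1 := by have := hTmTs.2; omega
      have hsub : (↑(C.erase Ts) : Set Trap) ⊆ ↑C := Finset.coe_subset.mpr (Finset.erase_subset _ _)
      have hmem : (∑ T ∈ C.erase Ts, ω T) ∈ MSet 𝒯 ω (Ts.lA - 1) Tm.gB := by
        refine ⟨C.erase Ts, fun T hT => hC𝒯 (hsub hT), fun x hx y hy h => hchain (hsub hx) (hsub hy) h,
          ?_, ⟨Tm, hTmC, rfl, ?_⟩, rfl⟩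
        · intro T hT
          have hT' : T ∈ C := Finset.mem_of_mem_erase hT
          have htp : tprec T Ts := hmax T hT' (Finset.ne_of_mem_erase hT)
          have hbT := hb T (hC𝒯 hT')
          exact ⟨hbT.1, by have := htp.1; omega, hbT.2, hTmmax T hT⟩
        · intro T' hT' hne
          rcases hchain (hsub (Finset.mem_coe.mpr hT')) (Finset.mem_coe.mpr hTmC') hne with h | h
          · exact h
          · exfalso
            have h1 : Tm.gB < T'.lB := h.2
            have h2 : T'.lB ≤ T'.gB := T'.hB
            have h3 : T'.gB ≤ Tm.gB := hTmmax T' hT'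
            omega
      calc ∑ T ∈ C.erase Ts, ω T ≤ muGamma 𝒯 ω (Ts.lA - 1) Tm.gB := by
            rw [muGamma_eq]; exact le_csSup (hMfin Tm.gB).bddAbove hmem
        _ ≤ _ := le_csSup hUfin.bddAbove (Or.inr ⟨Tm.gB, ⟨hq1, hq2⟩, rfl⟩)
  · have hUne : (({0} : Set NNReal) ∪ (fun q => muGamma 𝒯 ω (Ts.lA - 1) q) ''
        {q | 1 ≤ q ∧ q ≤ Ts.lB - 1}).Nonempty := ⟨0, Or.inl rfl⟩
    have key : ∀ y ∈ (({0} : Set NNReal) ∪ (fun q => muGamma 𝒯 ω (Ts.lA - 1) q) ''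
        {q | 1 ≤ q ∧ q ≤ Ts.lB - 1}), ω Ts + y ≤ sSup (TrapSSet 𝒯 ω Ts) := by
      have hzero : ω Ts + 0 ≤ sSup (TrapSSet 𝒯 ω Ts) := by
        simpa using le_csSup hSfin.bddAbove hsingle
      rintro y (rfl | ⟨q, ⟨hq1, hq2⟩, rfl⟩)
      · exact hzero
      · rcases Set.eq_empty_or_nonempty (MSet 𝒯 ω (Ts.lA - 1) q) with he | hMne
        · show ω Ts + muGamma 𝒯 ω (Ts.lA - 1) q ≤ _
          rw [muGamma_eq, he, csSup_empty]
          simpa using hzero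
        · obtain ⟨C, hC𝒯, hchain, hcont, _, hsum⟩ := hMne.csSup_mem (hMfin q)
          have hTsnot : Ts ∉ C := by
            intro h
            have h1 := (hcont Ts h).2.1
            have h2 := Ts.hA
            omega
          have hprec : ∀ T ∈ C, tprec T Ts := by
            intro T hT
            have h1 := (hcont T hT).2.1
            have h2 := (hcont T hT).2.2.2
            exact ⟨by omega, by omega⟩
          have hmem : ω Ts + muGamma 𝒯 ω (Ts.lA - 1) q ∈ TrapSSet 𝒯 ω Ts := by
            refine ⟨insert Ts C, ?_, ?_, Finset.mem_insert_self _ _, ?_, ?_⟩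
            · rw [Finset.coe_insert]
              exact Set.insert_subset (Finset.mem_coe.mpr hTs) hC𝒯
            · rw [Finset.coe_insert]
              exact hchain.insert fun b hb _ => Or.inr (hprec b (Finset.mem_coe.mp hb))
            · intro T hT hne
              rcases Finset.mem_insert.mp hT with h | h
              · exact absurd h hne
              · exact hprec T h
            · rw [Finset.sum_insert hTsnot, muGamma_eq, hsum]
          show ω Ts + muGamma 𝒯 ω (Ts.lA - 1) q ≤ _
          exact le_csSup hSfin.bddAbove hmem
    exact key _ (hUne.csSup_mem hUfin)
end

section
/- With μ_γ and μ_𝒯 as defined, for every (i,q) ∈ [n_A] × [n_B]: μ_γ(i,q) = max{ μ_γ(i−1,q), max{ μ_𝒯(T_s) : T_s ∈ 𝒯, γ_A(T_s)=i and γ_B(T_s)=q } }. -/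
theorem muGamma_recurrence (𝒯 : Finset Trap) (ω : Trap → NNReal)
    (hb : ∀ T ∈ 𝒯, 1 ≤ T.lA ∧ 1 ≤ T.lB)
    (i q : ℕ) (hi : 1 ≤ i) (hq : 1 ≤ q) :
    muGamma 𝒯 ω i q =
      max (muGamma 𝒯 ω (i - 1) q)
        (sSup {x | ∃ T ∈ 𝒯, T.gA = i ∧ T.gB = q ∧ x = muT 𝒯 ω T}) := by
  set Bd : NNReal := ∑ T ∈ 𝒯, ω T with hBd
  have hsum : ∀ C : Finset Trap, (↑C : Set Trap) ⊆ (𝒯 : Set Trap) →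
      ∑ T ∈ C, ω T ≤ Bd := by
    intro C hC
    exact Finset.sum_le_sum_of_subset (Finset.coe_subset.mp hC)
  have bddG : ∀ i' q' : ℕ, BddAbove {x | ∃ C : Finset Trap,
      ↑C ⊆ (𝒯 : Set Trap) ∧ IsChain tprec (↑C : Set Trap) ∧
      (∀ T ∈ C, contained T i' q') ∧
      (∃ T ∈ C, T.gB = q' ∧ ∀ T' ∈ C, T' ≠ T → tprec T' T) ∧ x = ∑ T ∈ C, ω T} := by
    intro i' q'
    refine ⟨Bd, ?_⟩
    rintro x ⟨C, hC, -, -, -, rfl⟩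
    exact hsum C hC
  have bddT : ∀ Ts : Trap, BddAbove {x | ∃ C : Finset Trap,
      ↑C ⊆ (𝒯 : Set Trap) ∧ IsChain tprec (↑C : Set Trap) ∧
      Ts ∈ C ∧ (∀ T ∈ C, T ≠ Ts → tprec T Ts) ∧ x = ∑ T ∈ C, ω T} := by
    intro Ts
    refine ⟨Bd, ?_⟩
    rintro x ⟨C, hC, -, -, -, rfl⟩
    exact hsum C hC
  have hmuTle : ∀ Ts : Trap, muT 𝒯 ω Ts ≤ Bd := by
    intro Ts
    apply csSup_le'
    rintro x ⟨C, hC, -, -, -, rfl⟩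
    exact hsum C hC
  have bddO : BddAbove {x | ∃ T ∈ 𝒯, T.gA = i ∧ T.gB = q ∧ x = muT 𝒯 ω T} := by
    refine ⟨Bd, ?_⟩
    rintro x ⟨T, -, -, -, rfl⟩
    exact hmuTle T
  apply le_antisymm
  · rw [muGamma, csSup_le_iff' (bddG i q)]
    rintro x ⟨C, hC, hchain, hcont, ⟨T, hTC, hTgB, hmax⟩, rfl⟩
    by_cases hTA : T.gA ≤ i - 1
    · refine le_trans ?_ (le_max_left _ _)
      apply le_csSup (bddG (i - 1) q)
      refine ⟨C, hC, hchain, ?_, ⟨T, hTC, hTgB, hmax⟩, rfl⟩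
      intro T' hT'
      obtain ⟨h1, h2, h3, h4⟩ := hcont T' hT'
      rcases eq_or_ne T' T with rfl | hne
      · exact ⟨h1, hTA, h3, h4⟩
      · have := hmax T' hT' hne
        refine ⟨h1, ?_, h3, h4⟩
        have h5 : T'.gA < T.lA := this.1
        have h6 : T.lA ≤ T.gA := T.hA
        omega
      -- T.lA ≤ T.gA via T.hA
    · have hTi : T.gA = i := by
        have := (hcont T hTC).2.1
        omega
      refine le_trans ?_ (le_max_right _ _)
      have hxT : (∑ T ∈ C, ω T) ≤ muT 𝒯 ω T := by
        apply le_csSup (bddT T)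
        exact ⟨C, hC, hchain, hTC, hmax, rfl⟩
      refine le_trans hxT ?_
      apply le_csSup bddO
      exact ⟨T, hC hTC, hTi, hTgB, rfl⟩
  · apply max_le
    · rw [muGamma, csSup_le_iff' (bddG (i - 1) q)]
      rintro x ⟨C, hC, hchain, hcont, hex, rfl⟩
      apply le_csSup (bddG i q)
      refine ⟨C, hC, hchain, ?_, hex, rfl⟩
      intro T hT
      obtain ⟨h1, h2, h3, h4⟩ := hcont T hT
      exact ⟨h1, le_trans h2 (Nat.sub_le i 1), h3, h4⟩
    · rw [csSup_le_iff' bddO]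
      rintro x ⟨T, hT𝒯, hgA, hgB, rfl⟩
      rw [muT, csSup_le_iff' (bddT T)]
      rintro y ⟨C, hC, hchain, hTC, hmax, rfl⟩
      apply le_csSup (bddG i q)
      refine ⟨C, hC, hchain, ?_, ⟨T, hTC, hgB, hmax⟩, rfl⟩
      intro T' hT'
      obtain ⟨h1, h2⟩ := hb T' (hC hT')
      rcases eq_or_ne T' T with rfl | hne
      · exact ⟨h1, le_of_eq hgA, h2, le_of_eq hgB⟩
      · obtain ⟨hA', hB'⟩ := hmax T' hT' hne
        have hA2 : T.lA ≤ T.gA := T.hA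
        have hB2 : T.lB ≤ T.gB := T.hB
        exact ⟨h1, by omega, h2, by omega⟩
end

section
/- If M is a matching with |M| = 3 whose intersection graph is a 3-cycle (all pairs intersect), and M' ⊇ M is a matching in which every edge intersects at most 2 others of M', then every edge of M' \ M is comparable (under ≺) to every edge of M; in particular M is a full connected component of H[M']. -/
theorem triangle_is_component (M' : Set (ℕ × ℕ)) (hM' : IsMatching M')
    (h2cpe : ∀ e ∈ M', ∀ f ∈ M', ∀ g ∈ M', ∀ h ∈ M',
      inter e f → inter e g → inter e h → f ≠ g → f ≠ h → g ≠ h → False)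
    (e1 e2 e3 : ℕ × ℕ) (h1 : e1 ∈ M') (h2 : e2 ∈ M') (h3 : e3 ∈ M')
    (h12 : inter e1 e2) (h13 : inter e1 e3) (h23 : inter e2 e3) :
    ∀ f ∈ M', f ∉ ({e1, e2, e3} : Set (ℕ × ℕ)) →
      (eprec f e1 ∨ eprec e1 f) ∧ (eprec f e2 ∨ eprec e2 f) ∧
      (eprec f e3 ∨ eprec e3 f) := by
  intro f hf hfn
  have hns : ∀ a b : ℕ × ℕ, inter a b → a ≠ b := by
    rintro a b (⟨h, _⟩ | ⟨h, _⟩) rfl <;> exact absurd h (lt_irrefl _)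
  have hsym : ∀ a b : ℕ × ℕ, inter a b → inter b a := by
    rintro a b (h | h) <;> [exact Or.inr h; exact Or.inl h]
  have hf1 : f ≠ e1 := fun h => hfn (by simp [h])
  have hf2 : f ≠ e2 := fun h => hfn (by simp [h])
  have hf3 : f ≠ e3 := fun h => hfn (by simp [h])
  have ni1 : ¬ inter e1 f := fun h =>
    h2cpe e1 h1 e2 h2 e3 h3 f hf h12 h13 h (hns _ _ h23) (Ne.symm hf2) (Ne.symm hf3)
  have ni2 : ¬ inter e2 f := fun h =>
    h2cpe e2 h2 e1 h1 e3 h3 f hf (hsym _ _ h12) h23 h (hns _ _ h13) (Ne.symm hf1) (Ne.symm hf3)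
  have ni3 : ¬ inter e3 f := fun h =>
    h2cpe e3 h3 e1 h1 e2 h2 f hf (hsym _ _ h13) (hsym _ _ h23) h (hns _ _ h12) (Ne.symm hf1) (Ne.symm hf2)
  have d1 := hM' f hf e1 h1 hf1
  have d2 := hM' f hf e2 h2 hf2
  have d3 := hM' f hf e3 h3 hf3
  simp only [inter, eprec, not_or, not_and] at *
  omega
end
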